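/- If T is an Ax-maximal consistent set of PTEL formulas, then the set T^{−◯} = {α : ◯α ∈ T} is also Ax-maximal consistent. -/
import Mathlib


namespace PTEL

/-- Formulas of the probabilistic temporal epistemic logic PTEL with `m` agents
(agents are `Fin m`).  Propositional letters are `atom n` (`n : ℕ`) together with
the special letters `act a` (the letter `A_a`, "agent `a` is active"). -/
inductive Frm (m : ℕ) : Type where
  | atom   : ℕ → Frm m
  | act    : Fin m → Frm m
  | neg    : Frm m → Frm m
  | and    : Frm m → Frm m → Frm m
  | next   : Frm m → Frm m
  | until  : Frm m → Frm m → Frm m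
  | prev   : Frm m → Frm m
  | since  : Frm m → Frm m → Frm m
  | know   : Fin m → Frm m → Frm m
  | common : Frm m → Frm m
  | pge    : ℚ → Frm m → Frm m            -- P_{≥ s} α
  | page   : Fin m → ℚ → Frm m → Frm m    -- P_{a, ≥ s} α

namespace Frm

variable {m : ℕ}

/-- `α → β` defined classically as `¬(α ∧ ¬β)`. -/
def imp (α β : Frm m) : Frm m := Frm.neg (Frm.and α (Frm.neg β))

/-- `α ∨ β` defined classically. -/
def orf (α β : Frm m) : Frm m := Frm.neg (Frm.and (Frm.neg α) (Frm.neg β))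

/-- `α ↔ β`. -/
def ifff (α β : Frm m) : Frm m := Frm.and (imp α β) (imp β α)

/-- A fixed tautology `⊤`. -/
def verum : Frm m := imp (Frm.atom 0) (Frm.atom 0)

/-- `◯^n α`. -/
def nextPow : ℕ → Frm m → Frm m
  | 0, α => α
  | n + 1, α => Frm.next (nextPow n α)

/-- `●^n α`. -/
def prevPow : ℕ → Frm m → Frm m
  | 0, α => α
  | n + 1, α => Frm.prev (prevPow n α)

/-- `⋀_{l=0}^{n-1} f l` (the empty conjunction is `⊤`). -/
def conjBelow (f : ℕ → Frm m) : ℕ → Frm m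
  | 0 => verum
  | n + 1 => Frm.and (conjBelow f n) (f n)

/-- `G α = ⋀_{a ∈ Agents} K_a α` (everybody knows). -/
def ek (α : Frm m) : Frm m :=
  (List.finRange m).foldr (fun a acc => Frm.and (Frm.know a α) acc) verum

/-- `G^n α` where `G^0 α = α` and `G^{n+1} α = G (G^n α)`. -/
def ekPow : ℕ → Frm m → Frm m
  | 0, α => α
  | n + 1, α => ek (ekPow n α)

/-- `◇ α = (α → α) U α`. -/
def sometime (α : Frm m) : Frm m := Frm.until (imp α α) α

/-- `□ α = ¬ ◇ ¬ α`. -/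
def always (α : Frm m) : Frm m := Frm.neg (sometime (Frm.neg α))

/-- `P_{< s} α  =  ¬ P_{≥ s} α`. -/
def plt (s : ℚ) (α : Frm m) : Frm m := Frm.neg (Frm.pge s α)

/-- `P_{≤ s} α  =  P_{≥ 1-s} ¬α`. -/
def ple (s : ℚ) (α : Frm m) : Frm m := Frm.pge (1 - s) (Frm.neg α)

/-- `P_{a, < s} α  =  ¬ P_{a, ≥ s} α`. -/
def palt (a : Fin m) (s : ℚ) (α : Frm m) : Frm m := Frm.neg (Frm.page a s α)

/-- `P_{a, ≤ s} α  =  P_{a, ≥ 1-s} ¬α`. -/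
def pale (a : Fin m) (s : ℚ) (α : Frm m) : Frm m := Frm.page a (1 - s) (Frm.neg α)

end Frm

/-- The unary operators `K_a`, `◯`, `●` used in `k`-nested implications. -/
inductive Op (m : ℕ) : Type where
  | know : Fin m → Op m
  | next : Op m
  | prev : Op m

def Op.app {m : ℕ} : Op m → Frm m → Frm m
  | .know a, α => Frm.know a α
  | .next, α => Frm.next α
  | .prev, α => Frm.prev α

/-- The `k`-nested implication `Φ_{k,B,X}(τ)`.  Here `β0` is the innermost formula
`β_0`, and `L = [(β_k, X_k), (β_{k-1}, X_{k-1}), …, (β_1, X_1)]` lists the remaining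
formulas of `B` paired with the operators of `X`, from the outermost inwards:
`Φ_{0,(β_0),()}(τ) = β_0 → τ` and
`Φ_{k,B,X}(τ) = β_k → X_k Φ_{k-1,(β_0,…,β_{k-1}),(X_1,…,X_{k-1})}(τ)` for `k ≥ 1`. -/
def KNI {m : ℕ} (β0 : Frm m) : List (Frm m × Op m) → Frm m → Frm m
  | [], τ => Frm.imp β0 τ
  | p :: L, τ => Frm.imp p.1 (Op.app p.2 (KNI β0 L τ))

/-- Instances of classical propositional tautologies: formulas true under every
Boolean valuation that respects `¬` and `∧`. -/
def IsTautology {m : ℕ} (φ : Frm m) : Prop :=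
  ∀ v : Frm m → Bool,
    (∀ α, v (Frm.neg α) = !(v α)) →
    (∀ α β, v (Frm.and α β) = (v α && v β)) →
    v φ = true

/-- `q ∈ [0,1] ∩ ℚ`. -/
def InUnit (q : ℚ) : Prop := 0 ≤ q ∧ q ≤ 1

/-- Derivability in the axiomatic system `Ax` of PTEL.  Premises of the
necessitation rules must be theorems (derivable from `∅`); the rules
`ruleUntil`, `ruleSince`, `ruleCommon`, `ruleArch`, `ruleArchA` are the
infinitary rules RU, RS, RC, RGA, RA formulated via `k`-nested implications. -/
inductive Deriv {m : ℕ} : Set (Frm m) → Frm m → Prop where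
  -- I. propositional part
  | hyp {T : Set (Frm m)} {φ} (h : φ ∈ T) : Deriv T φ
  | tauto {T : Set (Frm m)} {φ} (h : IsTautology φ) : Deriv T φ
  | mp {T : Set (Frm m)} {φ ψ} (h1 : Deriv T (Frm.imp φ ψ)) (h2 : Deriv T φ) : Deriv T ψ
  -- II. temporal axioms and rules
  | axNextNeg {T : Set (Frm m)} (α) :
      Deriv T (Frm.ifff (Frm.neg (Frm.next α)) (Frm.next (Frm.neg α)))
  | axNextImp {T : Set (Frm m)} (α β) :
      Deriv T (Frm.imp (Frm.next (Frm.imp α β)) (Frm.imp (Frm.next α) (Frm.next β)))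
  | axUntilNext {T : Set (Frm m)} (α β) :
      Deriv T (Frm.ifff (Frm.until α β)
        (Frm.orf β (Frm.and α (Frm.next (Frm.until α β)))))
  | axUntilSometime {T : Set (Frm m)} (α β) :
      Deriv T (Frm.imp (Frm.until α β) (Frm.sometime β))
  | axPrevNeg {T : Set (Frm m)} (α) :
      Deriv T (Frm.imp (Frm.neg (Frm.prev (Frm.neg α))) (Frm.prev α))
  | axPrevImp {T : Set (Frm m)} (α β) :
      Deriv T (Frm.imp (Frm.prev (Frm.imp α β)) (Frm.imp (Frm.prev α) (Frm.prev β)))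
  | axPrevAnd {T : Set (Frm m)} (α β) :
      Deriv T (Frm.imp (Frm.and (Frm.prev α) (Frm.prev β)) (Frm.prev (Frm.and α β)))
  | axNextPrev {T : Set (Frm m)} (α) :
      Deriv T (Frm.ifff (Frm.next (Frm.prev α)) α)
  | axNextPrevC1 {T : Set (Frm m)} (α) :
      Deriv T (Frm.imp (Frm.next (Frm.prev α)) (Frm.prev (Frm.next α)))
  | axNextPrevC2 {T : Set (Frm m)} (α γ) :
      Deriv T (Frm.imp (Frm.neg (Frm.prev (Frm.and γ (Frm.neg γ))))
        (Frm.ifff (Frm.next (Frm.prev α)) (Frm.prev (Frm.next α))))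
  | axSincePrev {T : Set (Frm m)} (α β) :
      Deriv T (Frm.ifff (Frm.since α β)
        (Frm.orf β (Frm.and (Frm.neg (Frm.prev (Frm.and α (Frm.neg α))))
          (Frm.and α (Frm.prev (Frm.since α β))))))
  | axOncePrev {T : Set (Frm m)} (β) :
      Deriv T (Frm.since (Frm.imp (Frm.prev β) (Frm.prev β)) (Frm.prev β))
  | ruleNextNec {T : Set (Frm m)} {α} (h : Deriv ∅ α) : Deriv T (Frm.next α)
  | rulePrevNec {T : Set (Frm m)} {α} (h : Deriv ∅ α) : Deriv T (Frm.prev α)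
  | ruleUntil {T : Set (Frm m)} {β0 : Frm m} {L : List (Frm m × Op m)} {α β : Frm m}
      (h : ∀ i : ℕ, Deriv T (KNI β0 L (Frm.neg
        (Frm.and (Frm.conjBelow (fun l => Frm.nextPow l α) i) (Frm.nextPow i β))))) :
      Deriv T (KNI β0 L (Frm.neg (Frm.until α β)))
  | ruleSince {T : Set (Frm m)} {β0 : Frm m} {L : List (Frm m × Op m)} {α β : Frm m}
      (h : ∀ i : ℕ, Deriv T (KNI β0 L (Frm.neg
        (Frm.and (Frm.conjBelow (fun l => Frm.prevPow l α) i)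
          (Frm.and (Frm.conjBelow (fun l => Frm.neg (Frm.prevPow l (Frm.and α (Frm.neg α)))) (i + 1))
            (Frm.prevPow i β)))))) :
      Deriv T (KNI β0 L (Frm.neg (Frm.since α β)))
  -- III. epistemic axioms and rules
  | axKImp {T : Set (Frm m)} (a : Fin m) (α β) :
      Deriv T (Frm.imp (Frm.know a (Frm.imp α β)) (Frm.imp (Frm.know a α) (Frm.know a β)))
  | axKRefl {T : Set (Frm m)} (a : Fin m) (α) :
      Deriv T (Frm.imp (Frm.act a) (Frm.imp (Frm.know a α) α))
  | axKAware {T : Set (Frm m)} (a : Fin m) :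
      Deriv T (Frm.imp (Frm.act a) (Frm.know a (Frm.act a)))
  | axKDead {T : Set (Frm m)} (a : Fin m) (α) :
      Deriv T (Frm.imp (Frm.neg (Frm.act a)) (Frm.know a (Frm.and α (Frm.neg α))))
  | axKSymm {T : Set (Frm m)} (a : Fin m) (α) :
      Deriv T (Frm.imp (Frm.know a (Frm.neg α)) (Frm.know a (Frm.neg (Frm.know a α))))
  | axKTrans {T : Set (Frm m)} (a : Fin m) (α) :
      Deriv T (Frm.imp (Frm.know a α) (Frm.know a (Frm.know a α)))
  | axCommon {T : Set (Frm m)} (α) (n : ℕ) :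
      Deriv T (Frm.imp (Frm.common α) (Frm.ekPow n α))
  | ruleKNec {T : Set (Frm m)} (a : Fin m) {α} (h : Deriv ∅ α) : Deriv T (Frm.know a α)
  | ruleCommon {T : Set (Frm m)} {β0 : Frm m} {L : List (Frm m × Op m)} {α : Frm m}
      (h : ∀ i : ℕ, Deriv T (KNI β0 L (Frm.ekPow i α))) :
      Deriv T (KNI β0 L (Frm.common α))
  -- IV. probabilities on runs
  | axPge0 {T : Set (Frm m)} (α) : Deriv T (Frm.pge 0 α)
  | axPleLt {T : Set (Frm m)} (α) {r t : ℚ} (hr : InUnit r) (ht : InUnit t) (h : r < t) :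
      Deriv T (Frm.imp (Frm.ple r α) (Frm.plt t α))
  | axPltLe {T : Set (Frm m)} (α) {t : ℚ} (ht : InUnit t) :
      Deriv T (Frm.imp (Frm.plt t α) (Frm.ple t α))
  | axPAdd {T : Set (Frm m)} (α β) {r t : ℚ} (hr : InUnit r) (ht : InUnit t) :
      Deriv T (Frm.imp
        (Frm.and (Frm.pge r α) (Frm.and (Frm.pge t β) (Frm.pge 1 (Frm.neg (Frm.and α β)))))
        (Frm.pge (min 1 (r + t)) (Frm.orf α β)))
  | axPAdd2 {T : Set (Frm m)} (α β) {r t : ℚ} (hr : InUnit r) (ht : InUnit t)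
      (h : r + t ≤ 1) :
      Deriv T (Frm.imp (Frm.and (Frm.ple r α) (Frm.plt t α)) (Frm.plt (r + t) (Frm.orf α β)))
  | axPPrev {T : Set (Frm m)} (α) :
      Deriv T (Frm.pge 1 (Frm.prev (Frm.and α (Frm.neg α))))
  | rulePNec {T : Set (Frm m)} {α} (h : Deriv ∅ α) : Deriv T (Frm.pge 1 α)
  | ruleArch {T : Set (Frm m)} {β0 : Frm m} {L : List (Frm m × Op m)} {α : Frm m} {r : ℚ}
      (hr0 : 0 < r) (hr1 : r ≤ 1)
      (h : ∀ i : ℕ, 1 / r ≤ (i : ℚ) → Deriv T (KNI β0 L (Frm.pge (r - 1 / (i : ℚ)) α))) :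
      Deriv T (KNI β0 L (Frm.pge r α))
  -- V. probabilities on possible worlds
  | axPAge0 {T : Set (Frm m)} (a : Fin m) (α) : Deriv T (Frm.page a 0 α)
  | axPALeLt {T : Set (Frm m)} (a : Fin m) (α) {r t : ℚ} (hr : InUnit r) (ht : InUnit t)
      (h : r < t) :
      Deriv T (Frm.imp (Frm.pale a r α) (Frm.palt a t α))
  | axPALtLe {T : Set (Frm m)} (a : Fin m) (α) {t : ℚ} (ht : InUnit t) :
      Deriv T (Frm.imp (Frm.palt a t α) (Frm.pale a t α))
  | axPAAdd {T : Set (Frm m)} (a : Fin m) (α β) {r t : ℚ} (hr : InUnit r) (ht : InUnit t) :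
      Deriv T (Frm.imp
        (Frm.and (Frm.page a r α)
          (Frm.and (Frm.page a t β) (Frm.page a 1 (Frm.neg (Frm.and α β)))))
        (Frm.page a (min 1 (r + t)) (Frm.orf α β)))
  | axPAAdd2 {T : Set (Frm m)} (a : Fin m) (α β) {r t : ℚ} (hr : InUnit r) (ht : InUnit t)
      (h : r + t ≤ 1) :
      Deriv T (Frm.imp (Frm.and (Frm.pale a r α) (Frm.palt a t α))
        (Frm.palt a (r + t) (Frm.orf α β)))
  | rulePANec {T : Set (Frm m)} (a : Fin m) {α} (h : Deriv ∅ α) : Deriv T (Frm.page a 1 α)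
  | ruleArchA {T : Set (Frm m)} (a : Fin m) {β0 : Frm m} {L : List (Frm m × Op m)}
      {α : Frm m} {r : ℚ} (hr0 : 0 < r) (hr1 : r ≤ 1)
      (h : ∀ i : ℕ, 1 / r ≤ (i : ℚ) →
        Deriv T (KNI β0 L (Frm.page a (r - 1 / (i : ℚ)) α))) :
      Deriv T (KNI β0 L (Frm.page a r α))

/-- A theory is inconsistent if it derives every formula. -/
def Inconsistent {m : ℕ} (T : Set (Frm m)) : Prop := ∀ φ : Frm m, Deriv T φ

def Consistent {m : ℕ} (T : Set (Frm m)) : Prop := ¬ Inconsistent T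

def MaximalConsistent {m : ℕ} (T : Set (Frm m)) : Prop :=
  Consistent T ∧ ∀ S : Set (Frm m), T ⊂ S → ¬ Consistent S

/-! ### Semantics -/

/-- A run assigns to each moment the set of propositional letters true at it
(`Sum.inl n` is the letter `atom n`, `Sum.inr a` is the letter `A_a`). -/
abbrev Run (m : ℕ) : Type := ℕ → Set (ℕ ⊕ Fin m)

/-- A finitely additive probability measure defined on an algebra of subsets of `X`. -/
structure FinAddProb (X : Type) where
  sets : Set (Set X)
  univ_mem : Set.univ ∈ sets
  compl_mem : ∀ A ∈ sets, Aᶜ ∈ sets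
  union_mem : ∀ A ∈ sets, ∀ B ∈ sets, A ∪ B ∈ sets
  mu : Set X → ℝ
  mu_nonneg : ∀ A ∈ sets, 0 ≤ mu A
  mu_univ : mu Set.univ = 1
  mu_add : ∀ A ∈ sets, ∀ B ∈ sets, Disjoint A B → mu (A ∪ B) = mu A + mu B

/-- A finitely additive probability space on a nonempty subset (`carrier`) of `X`,
with an algebra of subsets of the carrier. -/
structure SubFinAddProb (X : Type) where
  carrier : Set X
  carrier_nonempty : carrier.Nonempty
  sets : Set (Set X)
  sets_sub : ∀ A ∈ sets, A ⊆ carrier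
  carrier_mem : carrier ∈ sets
  compl_mem : ∀ A ∈ sets, carrier \ A ∈ sets
  union_mem : ∀ A ∈ sets, ∀ B ∈ sets, A ∪ B ∈ sets
  mu : Set X → ℝ
  mu_nonneg : ∀ A ∈ sets, 0 ≤ mu A
  mu_carrier : mu carrier = 1
  mu_add : ∀ A ∈ sets, ∀ B ∈ sets, Disjoint A B → mu (A ∪ B) = mu A + mu B

/-- A PTEL Kripke model. -/
structure Model (m : ℕ) where
  runs : Set (Run m)
  runs_nonempty : runs.Nonempty
  /-- epistemic accessibility relations on possible worlds (pairs run/time) -/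
  acc : Fin m → (↥runs × ℕ) → (↥runs × ℕ) → Prop
  acc_symm : ∀ a w w', acc a w w' → acc a w' w
  acc_trans : ∀ a w w' w'', acc a w w' → acc a w' w'' → acc a w w''
  /-- agent `a` is inactive at `w` iff no world is accessible from `w` -/
  inactive_iff : ∀ (a : Fin m) (w : ↥runs × ℕ),
    Sum.inr a ∉ w.1.1 w.2 ↔ ∀ w', ¬ acc a w w'
  /-- accessibility is reflexive at worlds where the agent is active -/
  acc_refl : ∀ (a : Fin m) (w : ↥runs × ℕ), Sum.inr a ∈ w.1.1 w.2 → acc a w w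
  /-- the probability on runs associated to each possible world -/
  runProb : (↥runs × ℕ) → FinAddProb ↥runs
  /-- the agents' probability spaces on possible worlds -/
  agentProb : Fin m → (↥runs × ℕ) → SubFinAddProb (↥runs × ℕ)

abbrev Model.World {m : ℕ} (M : Model m) : Type := ↥M.runs × ℕ

/-- Satisfaction of a formula at a possible world of a model.  Common knowledge is
interpreted via reachability (the equivalent formulation of `(r,n) ⊨ C β`). -/
def Sat {m : ℕ} (M : Model m) : Frm m → M.World → Prop
  | .atom n, w => Sum.inl n ∈ w.1.1 w.2
  | .act a, w => Sum.inr a ∈ w.1.1 w.2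
  | .neg α, w => ¬ Sat M α w
  | .and α β, w => Sat M α w ∧ Sat M β w
  | .next α, w => Sat M α (w.1, w.2 + 1)
  | .until α β, w => ∃ j, w.2 ≤ j ∧ Sat M β (w.1, j) ∧
      ∀ k, w.2 ≤ k → k < j → Sat M α (w.1, k)
  | .prev α, w => w.2 = 0 ∨ ∃ n, w.2 = n + 1 ∧ Sat M α (w.1, n)
  | .since α β, w => ∃ j, j ≤ w.2 ∧ Sat M β (w.1, j) ∧
      ∀ k, j < k → k ≤ w.2 → Sat M α (w.1, k)
  | .know a α, w => ∀ w', M.acc a w w' → Sat M α w'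
  | .common α, w => ∀ w', Relation.ReflTransGen (fun u v => ∃ a, M.acc a u v) w w' →
      Sat M α w'
  | .pge s α, w => (s : ℝ) ≤ (M.runProb w).mu {r : ↥M.runs | Sat M α (r, 0)}
  | .page a s α, w => (s : ℝ) ≤ (M.agentProb a w).mu
      {w' : M.World | w' ∈ (M.agentProb a w).carrier ∧ Sat M α w'}

/-- A model is measurable if all definable sets of runs / of possible worlds are
measurable. -/
def Model.Measurable {m : ℕ} (M : Model m) : Prop :=
  ∀ (β : Frm m) (w : M.World),
    {r : ↥M.runs | Sat M β (r, 0)} ∈ (M.runProb w).sets ∧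
    ∀ a : Fin m,
      {w' : M.World | w' ∈ (M.agentProb a w).carrier ∧ Sat M β w'} ∈ (M.agentProb a w).sets

/-- A set of formulas is satisfiable if it holds at a possible world of some
measurable model. -/
def SatisfiableSet {m : ℕ} (T : Set (Frm m)) : Prop :=
  ∃ M : Model m, M.Measurable ∧ ∃ w : M.World, ∀ φ ∈ T, Sat M φ w

end PTEL

namespace PTEL


variable {m : ℕ}

section Taut

open Frm

lemma taut_self (a : Frm m) : IsTautology (Frm.imp a a) := by
  intro v hn ha; simp only [Frm.imp, hn, ha]; cases v a <;> rfl

lemma taut_K (a b : Frm m) : IsTautology (Frm.imp a (Frm.imp b a)) := by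
  intro v hn ha; simp only [Frm.imp, hn, ha]; cases v a <;> cases v b <;> rfl

lemma taut_S (a b c : Frm m) :
    IsTautology (Frm.imp (Frm.imp a (Frm.imp b c))
      (Frm.imp (Frm.imp a b) (Frm.imp a c))) := by
  intro v hn ha; simp only [Frm.imp, hn, ha]
  cases v a <;> cases v b <;> cases v c <;> rfl

lemma taut_import (a b c : Frm m) :
    IsTautology (Frm.imp (Frm.imp a (Frm.imp b c)) (Frm.imp (Frm.and a b) c)) := by
  intro v hn ha; simp only [Frm.imp, hn, ha]
  cases v a <;> cases v b <;> cases v c <;> rfl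

lemma taut_export (a b c : Frm m) :
    IsTautology (Frm.imp (Frm.imp (Frm.and a b) c) (Frm.imp a (Frm.imp b c))) := by
  intro v hn ha; simp only [Frm.imp, hn, ha]
  cases v a <;> cases v b <;> cases v c <;> rfl

lemma taut_exfalso (a b : Frm m) :
    IsTautology (Frm.imp a (Frm.imp (Frm.neg a) b)) := by
  intro v hn ha; simp only [Frm.imp, hn, ha]
  cases v a <;> cases v b <;> rfl

lemma taut_cases (a b : Frm m) :
    IsTautology (Frm.imp (Frm.imp a b) (Frm.imp (Frm.imp (Frm.neg a) b) b)) := by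
  intro v hn ha; simp only [Frm.imp, hn, ha]
  cases v a <;> cases v b <;> rfl

lemma taut_and_left (a b : Frm m) : IsTautology (Frm.imp (Frm.and a b) a) := by
  intro v hn ha; simp only [Frm.imp, hn, ha]
  cases v a <;> cases v b <;> rfl

lemma taut_and_right (a b : Frm m) : IsTautology (Frm.imp (Frm.and a b) b) := by
  intro v hn ha; simp only [Frm.imp, hn, ha]
  cases v a <;> cases v b <;> rfl

lemma taut_verum : IsTautology (Frm.verum (m := m)) := by
  intro v hn ha; simp only [Frm.verum, Frm.imp, hn, ha]
  cases v (Frm.atom 0) <;> rfl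

lemma taut_neg_contra (a : Frm m) : IsTautology (Frm.neg (Frm.and a (Frm.neg a))) := by
  intro v hn ha; simp only [hn, ha]; cases v a <;> rfl

end Taut

section Derived

variable {T : Set (Frm m)} {a b c φ ψ χ : Frm m}

lemma weaken_imp (h : Deriv T ψ) : Deriv T (Frm.imp φ ψ) :=
  Deriv.mp (Deriv.tauto (taut_K _ _)) h

lemma mp2 (h : Deriv T (Frm.imp φ (Frm.imp χ ψ))) (h1 : Deriv T (Frm.imp φ χ)) :
    Deriv T (Frm.imp φ ψ) :=
  Deriv.mp (Deriv.mp (Deriv.tauto (taut_S _ _ _)) h) h1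

lemma importE (h : Deriv T (Frm.imp a (Frm.imp b c))) :
    Deriv T (Frm.imp (Frm.and a b) c) :=
  Deriv.mp (Deriv.tauto (taut_import _ _ _)) h

lemma exportE (h : Deriv T (Frm.imp (Frm.and a b) c)) :
    Deriv T (Frm.imp a (Frm.imp b c)) :=
  Deriv.mp (Deriv.tauto (taut_export _ _ _)) h

lemma top_intro (h : Deriv T ψ) : Deriv T (Frm.imp Frm.verum ψ) := weaken_imp h

lemma top_elim (h : Deriv T (Frm.imp Frm.verum ψ)) : Deriv T ψ :=
  Deriv.mp h (Deriv.tauto taut_verum)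

lemma andE1 (h : Deriv T (Frm.and a b)) : Deriv T a :=
  Deriv.mp (Deriv.tauto (taut_and_left _ _)) h

lemma andE2 (h : Deriv T (Frm.and a b)) : Deriv T b :=
  Deriv.mp (Deriv.tauto (taut_and_right _ _)) h

end Derived

theorem next_lift {S : Set (Frm m)} {φ : Frm m} (h : Deriv S φ) :
    ∀ {T : Set (Frm m)}, (∀ α ∈ S, Deriv T (Frm.next α)) → Deriv T (Frm.next φ) := by
  induction h with
  | hyp h => exact fun hT => hT _ h
  | tauto h => exact fun _ => .ruleNextNec (.tauto h)
  | mp h1 h2 ih1 ih2 => exact fun hT => .mp (.mp (.axNextImp _ _) (ih1 hT)) (ih2 hT)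
  | axNextNeg α => exact fun _ => .ruleNextNec (.axNextNeg α)
  | axNextImp α β => exact fun _ => .ruleNextNec (.axNextImp α β)
  | axUntilNext α β => exact fun _ => .ruleNextNec (.axUntilNext α β)
  | axUntilSometime α β => exact fun _ => .ruleNextNec (.axUntilSometime α β)
  | axPrevNeg α => exact fun _ => .ruleNextNec (.axPrevNeg α)
  | axPrevImp α β => exact fun _ => .ruleNextNec (.axPrevImp α β)
  | axPrevAnd α β => exact fun _ => .ruleNextNec (.axPrevAnd α β)
  | axNextPrev α => exact fun _ => .ruleNextNec (.axNextPrev α)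
  | axNextPrevC1 α => exact fun _ => .ruleNextNec (.axNextPrevC1 α)
  | axNextPrevC2 α γ => exact fun _ => .ruleNextNec (.axNextPrevC2 α γ)
  | axSincePrev α β => exact fun _ => .ruleNextNec (.axSincePrev α β)
  | axOncePrev β => exact fun _ => .ruleNextNec (.axOncePrev β)
  | ruleNextNec h => exact fun _ => .ruleNextNec (.ruleNextNec h)
  | rulePrevNec h => exact fun _ => .ruleNextNec (.rulePrevNec h)
  | ruleUntil h ih =>
      intro T hT
      exact top_elim (Deriv.ruleUntil (L := (Frm.verum, Op.next) :: _) (fun i => top_intro (ih i hT)))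
  | ruleSince h ih =>
      intro T hT
      exact top_elim (Deriv.ruleSince (L := (Frm.verum, Op.next) :: _) (fun i => top_intro (ih i hT)))
  | axKImp a α β => exact fun _ => .ruleNextNec (.axKImp a α β)
  | axKRefl a α => exact fun _ => .ruleNextNec (.axKRefl a α)
  | axKAware a => exact fun _ => .ruleNextNec (.axKAware a)
  | axKDead a α => exact fun _ => .ruleNextNec (.axKDead a α)
  | axKSymm a α => exact fun _ => .ruleNextNec (.axKSymm a α)
  | axKTrans a α => exact fun _ => .ruleNextNec (.axKTrans a α)
  | axCommon α n => exact fun _ => .ruleNextNec (.axCommon α n)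
  | ruleKNec a h => exact fun _ => .ruleNextNec (.ruleKNec a h)
  | ruleCommon h ih =>
      intro T hT
      exact top_elim (Deriv.ruleCommon (L := (Frm.verum, Op.next) :: _) (fun i => top_intro (ih i hT)))
  | axPge0 α => exact fun _ => .ruleNextNec (.axPge0 α)
  | axPleLt α hr ht h => exact fun _ => .ruleNextNec (.axPleLt α hr ht h)
  | axPltLe α ht => exact fun _ => .ruleNextNec (.axPltLe α ht)
  | axPAdd α β hr ht => exact fun _ => .ruleNextNec (.axPAdd α β hr ht)
  | axPAdd2 α β hr ht h => exact fun _ => .ruleNextNec (.axPAdd2 α β hr ht h)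
  | axPPrev α => exact fun _ => .ruleNextNec (.axPPrev α)
  | rulePNec h => exact fun _ => .ruleNextNec (.rulePNec h)
  | ruleArch hr0 hr1 h ih =>
      intro T hT
      exact top_elim (Deriv.ruleArch (L := (Frm.verum, Op.next) :: _) hr0 hr1 (fun i hi => top_intro (ih i hi hT)))
  | axPAge0 a α => exact fun _ => .ruleNextNec (.axPAge0 a α)
  | axPALeLt a α hr ht h => exact fun _ => .ruleNextNec (.axPALeLt a α hr ht h)
  | axPALtLe a α ht => exact fun _ => .ruleNextNec (.axPALtLe a α ht)
  | axPAAdd a α β hr ht => exact fun _ => .ruleNextNec (.axPAAdd a α β hr ht)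
  | axPAAdd2 a α β hr ht h => exact fun _ => .ruleNextNec (.axPAAdd2 a α β hr ht h)
  | rulePANec a h => exact fun _ => .ruleNextNec (.rulePANec a h)
  | ruleArchA a hr0 hr1 h ih =>
      intro T hT
      exact top_elim (Deriv.ruleArchA (L := (Frm.verum, Op.next) :: _) a hr0 hr1 (fun i hi => top_intro (ih i hi hT)))


theorem deduction_aux {S : Set (Frm m)} {ψ : Frm m} (h : Deriv S ψ) :
    ∀ {T : Set (Frm m)} {φ : Frm m}, S = insert φ T → Deriv T (Frm.imp φ ψ) := by
  induction h with
  | hyp h =>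
      intro T φ hS
      subst hS
      rcases h with h | h
      · subst h; exact Deriv.tauto (taut_self _)
      · exact weaken_imp (Deriv.hyp h)
  | tauto h => exact fun hS => weaken_imp (.tauto h)
  | mp h1 h2 ih1 ih2 => exact fun hS => mp2 (ih1 hS) (ih2 hS)
  | axNextNeg α => exact fun _ => weaken_imp (.axNextNeg α)
  | axNextImp α β => exact fun _ => weaken_imp (.axNextImp α β)
  | axUntilNext α β => exact fun _ => weaken_imp (.axUntilNext α β)
  | axUntilSometime α β => exact fun _ => weaken_imp (.axUntilSometime α β)
  | axPrevNeg α => exact fun _ => weaken_imp (.axPrevNeg α)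
  | axPrevImp α β => exact fun _ => weaken_imp (.axPrevImp α β)
  | axPrevAnd α β => exact fun _ => weaken_imp (.axPrevAnd α β)
  | axNextPrev α => exact fun _ => weaken_imp (.axNextPrev α)
  | axNextPrevC1 α => exact fun _ => weaken_imp (.axNextPrevC1 α)
  | axNextPrevC2 α γ => exact fun _ => weaken_imp (.axNextPrevC2 α γ)
  | axSincePrev α β => exact fun _ => weaken_imp (.axSincePrev α β)
  | axOncePrev β => exact fun _ => weaken_imp (.axOncePrev β)
  | ruleNextNec h => exact fun _ => weaken_imp (.ruleNextNec h)
  | rulePrevNec h => exact fun _ => weaken_imp (.rulePrevNec h)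
  | ruleUntil h ih =>
      rename_i β0 L α β
      intro T φ hS
      cases L with
      | nil =>
          exact exportE (Deriv.ruleUntil (β0 := Frm.and φ β0) (L := [])
            (fun i => importE (ih i hS)))
      | cons p L' =>
          exact exportE (Deriv.ruleUntil (β0 := β0) (L := (Frm.and φ p.1, p.2) :: L')
            (fun i => importE (ih i hS)))
  | ruleSince h ih =>
      rename_i β0 L α β
      intro T φ hS
      cases L with
      | nil =>
          exact exportE (Deriv.ruleSince (β0 := Frm.and φ β0) (L := [])
            (fun i => importE (ih i hS)))
      | cons p L' =>
          exact exportE (Deriv.ruleSince (β0 := β0) (L := (Frm.and φ p.1, p.2) :: L')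
            (fun i => importE (ih i hS)))
  | axKImp a α β => exact fun _ => weaken_imp (.axKImp a α β)
  | axKRefl a α => exact fun _ => weaken_imp (.axKRefl a α)
  | axKAware a => exact fun _ => weaken_imp (.axKAware a)
  | axKDead a α => exact fun _ => weaken_imp (.axKDead a α)
  | axKSymm a α => exact fun _ => weaken_imp (.axKSymm a α)
  | axKTrans a α => exact fun _ => weaken_imp (.axKTrans a α)
  | axCommon α n => exact fun _ => weaken_imp (.axCommon α n)
  | ruleKNec a h => exact fun _ => weaken_imp (.ruleKNec a h)
  | ruleCommon h ih =>
      rename_i β0 L α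
      intro T φ hS
      cases L with
      | nil =>
          exact exportE (Deriv.ruleCommon (β0 := Frm.and φ β0) (L := [])
            (fun i => importE (ih i hS)))
      | cons p L' =>
          exact exportE (Deriv.ruleCommon (β0 := β0) (L := (Frm.and φ p.1, p.2) :: L')
            (fun i => importE (ih i hS)))
  | axPge0 α => exact fun _ => weaken_imp (.axPge0 α)
  | axPleLt α hr ht h => exact fun _ => weaken_imp (.axPleLt α hr ht h)
  | axPltLe α ht => exact fun _ => weaken_imp (.axPltLe α ht)
  | axPAdd α β hr ht => exact fun _ => weaken_imp (.axPAdd α β hr ht)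
  | axPAdd2 α β hr ht h => exact fun _ => weaken_imp (.axPAdd2 α β hr ht h)
  | axPPrev α => exact fun _ => weaken_imp (.axPPrev α)
  | rulePNec h => exact fun _ => weaken_imp (.rulePNec h)
  | ruleArch hr0 hr1 h ih =>
      rename_i β0 L α r
      intro T φ hS
      cases L with
      | nil =>
          exact exportE (Deriv.ruleArch (β0 := Frm.and φ β0) (L := []) hr0 hr1
            (fun i hi => importE (ih i hi hS)))
      | cons p L' =>
          exact exportE (Deriv.ruleArch (β0 := β0) (L := (Frm.and φ p.1, p.2) :: L') hr0 hr1
            (fun i hi => importE (ih i hi hS)))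
  | axPAge0 a α => exact fun _ => weaken_imp (.axPAge0 a α)
  | axPALeLt a α hr ht h => exact fun _ => weaken_imp (.axPALeLt a α hr ht h)
  | axPALtLe a α ht => exact fun _ => weaken_imp (.axPALtLe a α ht)
  | axPAAdd a α β hr ht => exact fun _ => weaken_imp (.axPAAdd a α β hr ht)
  | axPAAdd2 a α β hr ht h => exact fun _ => weaken_imp (.axPAAdd2 a α β hr ht h)
  | rulePANec a h => exact fun _ => weaken_imp (.rulePANec a h)
  | ruleArchA a hr0 hr1 h ih =>
      rename_i β0 L α r
      intro T φ hS
      cases L with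
      | nil =>
          exact exportE (Deriv.ruleArchA (β0 := Frm.and φ β0) (L := []) a hr0 hr1
            (fun i hi => importE (ih i hi hS)))
      | cons p L' =>
          exact exportE (Deriv.ruleArchA (β0 := β0) (L := (Frm.and φ p.1, p.2) :: L') a hr0 hr1
            (fun i hi => importE (ih i hi hS)))

theorem deduction {T : Set (Frm m)} {φ ψ : Frm m} (h : Deriv (insert φ T) ψ) :
    Deriv T (Frm.imp φ ψ) :=
  deduction_aux h rfl

theorem mcs_negcomplete {T : Set (Frm m)} (hT : MaximalConsistent T) (φ : Frm m) :
    φ ∈ T ∨ Frm.neg φ ∈ T := by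
  by_contra hc
  push_neg at hc
  obtain ⟨h1, h2⟩ := hc
  have inc1 : Inconsistent (insert φ T) :=
    not_not.mp (hT.2 _ (Set.ssubset_insert h1))
  have inc2 : Inconsistent (insert (Frm.neg φ) T) :=
    not_not.mp (hT.2 _ (Set.ssubset_insert h2))
  exact hT.1 (fun ψ =>
    Deriv.mp (Deriv.mp (Deriv.tauto (taut_cases φ ψ)) (deduction (inc1 ψ)))
      (deduction (inc2 ψ)))

theorem mcs_closed {T : Set (Frm m)} (hT : MaximalConsistent T) {φ : Frm m}
    (h : Deriv T φ) : φ ∈ T := by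
  rcases mcs_negcomplete hT φ with hm | hm
  · exact hm
  · exact absurd (fun ψ => Deriv.mp (Deriv.mp (Deriv.tauto (taut_exfalso φ ψ)) h)
      (Deriv.hyp hm)) hT.1


/-- If `T` is maximal consistent, then so is `T^{-◯} = {α : ◯α ∈ T}`. -/
theorem mcs_unnext {m : ℕ} (T : Set (Frm m)) (hT : MaximalConsistent T) :
    MaximalConsistent {α : Frm m | Frm.next α ∈ T} := by
  set T' : Set (Frm m) := {α : Frm m | Frm.next α ∈ T} with hT'
  constructor
  · -- consistency
    intro hinc
    set bot : Frm m := Frm.and (Frm.atom 0) (Frm.neg (Frm.atom 0)) with hbot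
    have d1 : Deriv T (Frm.next bot) :=
      next_lift (hinc bot) (fun α hα => Deriv.hyp hα)
    have d2 : Deriv T (Frm.next (Frm.neg bot)) :=
      Deriv.ruleNextNec (Deriv.tauto (taut_neg_contra _))
    have d3 : Deriv T (Frm.neg (Frm.next bot)) :=
      Deriv.mp (andE2 (Deriv.axNextNeg bot)) d2
    exact hT.1 (fun ψ =>
      Deriv.mp (Deriv.mp (Deriv.tauto (taut_exfalso _ ψ)) d1) d3)
  · -- maximality
    intro S hS hScons
    obtain ⟨hsub, hne⟩ := hS
    obtain ⟨β, hβS, hβT'⟩ := Set.not_subset.mp (fun h => hne h)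
    have hnmem : Frm.next β ∉ T := hβT'
    have hnn : Frm.neg (Frm.next β) ∈ T :=
      (mcs_negcomplete hT (Frm.next β)).resolve_left hnmem
    have hdn : Deriv T (Frm.next (Frm.neg β)) :=
      Deriv.mp (andE1 (Deriv.axNextNeg β)) (Deriv.hyp hnn)
    have hmem : Frm.neg β ∈ T' := mcs_closed hT hdn
    exact hScons (fun ψ =>
      Deriv.mp (Deriv.mp (Deriv.tauto (taut_exfalso β ψ)) (Deriv.hyp hβS))
        (Deriv.hyp (hsub hmem)))

end PTEL
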